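/- Let d_c ≥ 2, assume P(r|0)+P(r|1) > 0 for all r ∈ R, suppose ε is admissible for d_c, and take the reconstruction function φ = φ_c*. For r, r' ∈ R^{d_c−1}, if P_{d_c−1}(r|0)·P_{d_c−1}(r'|1) > P_{d_c−1}(r'|0)·P_{d_c−1}(r|1) (i.e., the likelihood ratio of r strictly exceeds that of r', with ratios having zero denominator treated as largest), then Φ(r) ≻ Φ(r'). -/

import Mathlib

open scoped BigOperators Classical

/-- Check-node joint conditional pmf:
`P_d(r|x) = (1/2)^(d-1) · Σ_{b : parity b = x} Π_i P(r_i | b_i)`. -/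
noncomputable def checkPmf {R : Type*} [Fintype R] (P : R → ZMod 2 → ℝ) (d : ℕ)
    (r : Fin d → R) (x : ZMod 2) : ℝ :=
  (1 / 2 : ℝ) ^ (d - 1) *
    ∑ b ∈ Finset.univ.filter (fun b : Fin d → ZMod 2 => ∑ i, b i = x),
      ∏ i, P (r i) (b i)

/-- `g(r) = (P(r|0) − P(r|1)) / (P(r|0) + P(r|1))`. -/
noncomputable def gfun {R : Type*} (P : R → ZMod 2 → ℝ) (r : R) : ℝ :=
  (P r 0 - P r 1) / (P r 0 + P r 1)

/-- `g_d(r) = Π_{i=1}^d g(r_i)` for a tuple `r ∈ R^d`. -/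
noncomputable def gProd {R : Type*} (P : R → ZMod 2 → ℝ) {d : ℕ} (r : Fin d → R) : ℝ :=
  ∏ i, gfun P (r i)

/-- The optimal check-node reconstruction function `φ_c*`. -/
noncomputable def phiStar {R : Type*} (P : R → ZMod 2 → ℝ) (ε : ℝ) (r : R) : ℝ :=
  if |gfun P r| = 1 then Real.sign (gfun P r) * ε
  else if gfun P r = 0 then 0
  else -Real.sign (gfun P r) * Real.log |gfun P r|

/-- Combined check-node value:
`Φ(r) = (Π_i sgn(φ(r_i))) · Σ_i |φ(r_i)|`. -/
noncomputable def PhiC {R : Type*} (φ : R → ℝ) {d : ℕ} (r : Fin d → R) : ℝ :=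
  (∏ i, Real.sign (φ (r i))) * ∑ i, |φ (r i)|

/-- `α ≻ β` iff `sgn α > sgn β`, or (`sgn α = sgn β` and `α < β`). -/
def rsucc (α β : ℝ) : Prop :=
  Real.sign β < Real.sign α ∨ (Real.sign α = Real.sign β ∧ α < β)

/-- `ε` is admissible for `d_c`. -/
def admissible {R : Type*} [Fintype R] (P : R → ZMod 2 → ℝ) (dc : ℕ) (ε : ℝ) : Prop :=
  0 < ε * dc ∧
    ∀ r r' : Fin (dc - 1) → R,
      gProd P r ≠ gProd P r' →
      Real.sign (gProd P r) = Real.sign (gProd P r') →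
      Real.sign (gProd P r) ≠ 0 →
      ε * dc < abs (Real.log |gProd P r| - Real.log |gProd P r'|)

-- chi section (proved already)
noncomputable def chi : ZMod 2 → ℝ := fun x => if x = 0 then 1 else -1

lemma zmod2_sum (f : ZMod 2 → ℝ) : ∑ x : ZMod 2, f x = f 0 + f 1 := by
  have : (Finset.univ : Finset (ZMod 2)) = {0, 1} := by decide
  rw [this, Finset.sum_pair (by decide)]

lemma chi_add (x y : ZMod 2) : chi (x + y) = chi x * chi y := by
  have hx : x = 0 ∨ x = 1 := by revert x; decide
  have hy : y = 0 ∨ y = 1 := by revert y; decide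
  rcases hx with hx | hx <;> rcases hy with hy | hy <;> subst hx <;> subst hy <;>
    norm_num [chi] <;> decide

lemma chi_sum {ι : Type*} (s : Finset ι) (b : ι → ZMod 2) :
    chi (∑ i ∈ s, b i) = ∏ i ∈ s, chi (b i) := by
  classical
  induction s using Finset.induction with
  | empty => simp [chi]
  | insert _ _ h ih => rw [Finset.sum_insert h, Finset.prod_insert h, chi_add, ih]

lemma sum_prod_eval {d : ℕ} (f : Fin d → ZMod 2 → ℝ) :
    ∑ b : Fin d → ZMod 2, ∏ i, f i (b i) = ∏ i, (f i 0 + f i 1) := by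
  rw [← Fintype.prod_sum]
  exact Finset.prod_congr rfl fun i _ => zmod2_sum (f i)

lemma checkPmf_add {R : Type*} [Fintype R] (P : R → ZMod 2 → ℝ) (d : ℕ) (r : Fin d → R) :
    checkPmf P d r 0 + checkPmf P d r 1 =
      (1 / 2 : ℝ) ^ (d - 1) * ∏ i, (P (r i) 0 + P (r i) 1) := by
  unfold checkPmf
  rw [← mul_add]
  congr 1
  rw [← sum_prod_eval (fun i x => P (r i) x)]
  rw [Finset.sum_filter, Finset.sum_filter, ← Finset.sum_add_distrib]
  refine Finset.sum_congr rfl fun b _ => ?_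
  have : (∑ i, b i) = 0 ∨ (∑ i, b i) = 1 := by generalize (∑ i, b i) = x; revert x; decide
  rcases this with h | h <;> simp [h]

lemma checkPmf_sub {R : Type*} [Fintype R] (P : R → ZMod 2 → ℝ) (d : ℕ) (r : Fin d → R) :
    checkPmf P d r 0 - checkPmf P d r 1 =
      (1 / 2 : ℝ) ^ (d - 1) * ∏ i, (P (r i) 0 - P (r i) 1) := by
  unfold checkPmf
  rw [← mul_sub]
  congr 1
  have key : ∀ b : Fin d → ZMod 2,
      (if (∑ i, b i) = 0 then ∏ i, P (r i) (b i) else 0) -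
        (if (∑ i, b i) = 1 then ∏ i, P (r i) (b i) else 0) =
      ∏ i, (chi (b i) * P (r i) (b i)) := by
    intro b
    rw [Finset.prod_mul_distrib, ← chi_sum]
    have : (∑ i, b i) = 0 ∨ (∑ i, b i) = 1 := by generalize (∑ i, b i) = x; revert x; decide
    rcases this with h | h <;> simp [h, chi]
  rw [Finset.sum_filter, Finset.sum_filter, ← Finset.sum_sub_distrib]
  rw [Finset.sum_congr rfl fun b _ => key b]
  rw [sum_prod_eval (fun i x => chi x * P (r i) x)]
  refine Finset.prod_congr rfl fun i _ => ?_
  norm_num [chi]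
  ring

lemma gProd_eq {R : Type*} (P : R → ZMod 2 → ℝ) {d : ℕ} (r : Fin d → R) :
    gProd P r = (∏ i, (P (r i) 0 - P (r i) 1)) / (∏ i, (P (r i) 0 + P (r i) 1)) := by
  unfold gProd gfun
  rw [Finset.prod_div_distrib]

lemma real_sign_mul (a b : ℝ) : Real.sign (a * b) = Real.sign a * Real.sign b := by
  rcases lt_trichotomy a 0 with ha | ha | ha
  · rcases lt_trichotomy b 0 with hb | hb | hb
    · rw [Real.sign_of_pos (mul_pos_of_neg_of_neg ha hb), Real.sign_of_neg ha,
        Real.sign_of_neg hb]; norm_num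
    · rw [hb, mul_zero, Real.sign_zero, mul_zero]
    · rw [Real.sign_of_neg (mul_neg_of_neg_of_pos ha hb), Real.sign_of_neg ha,
        Real.sign_of_pos hb]; norm_num
  · rw [ha, zero_mul, Real.sign_zero, zero_mul]
  · rcases lt_trichotomy b 0 with hb | hb | hb
    · rw [Real.sign_of_neg (mul_neg_of_pos_of_neg ha hb), Real.sign_of_pos ha,
        Real.sign_of_neg hb]; norm_num
    · rw [hb, mul_zero, Real.sign_zero, mul_zero]
    · rw [Real.sign_of_pos (mul_pos ha hb), Real.sign_of_pos ha, Real.sign_of_pos hb]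
      norm_num

lemma real_sign_prod {ι : Type*} (s : Finset ι) (f : ι → ℝ) :
    Real.sign (∏ i ∈ s, f i) = ∏ i ∈ s, Real.sign (f i) := by
  classical
  induction s using Finset.induction with
  | empty => simpa using Real.sign_one
  | insert _ _ h ih => rw [Finset.prod_insert h, Finset.prod_insert h, real_sign_mul, ih]

lemma abs_gfun_le_one {R : Type*} (P : R → ZMod 2 → ℝ) (hP0 : ∀ r x, 0 ≤ P r x)
    (hpos : ∀ r : R, 0 < P r 0 + P r 1) (r : R) : |gfun P r| ≤ 1 := by
  unfold gfun
  rw [abs_div, abs_of_pos (hpos r), div_le_one (hpos r)]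
  exact abs_le.mpr ⟨by linarith [hP0 r 0, hP0 r 1], by linarith [hP0 r 0, hP0 r 1]⟩

lemma sign_phiStar {R : Type*} (P : R → ZMod 2 → ℝ) {ε : ℝ} (hε : 0 < ε) (r : R)
    (hle : |gfun P r| ≤ 1) :
    Real.sign (phiStar P ε r) = Real.sign (gfun P r) := by
  unfold phiStar
  by_cases h1 : |gfun P r| = 1
  · rw [if_pos h1]
    have hg : gfun P r ≠ 0 := by intro h; rw [h] at h1; simp at h1
    rcases Real.sign_apply_eq_of_ne_zero _ hg with h | h <;> rw [h]
    · have : (-1 : ℝ) * ε = -ε := by ring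
      rw [this, Real.sign_neg, Real.sign_of_pos hε]
    · rw [one_mul, Real.sign_of_pos hε]
  · rw [if_neg h1]
    by_cases h0 : gfun P r = 0
    · rw [if_pos h0, h0, Real.sign_zero]
    · rw [if_neg h0]
      have hlt : |gfun P r| < 1 := lt_of_le_of_ne hle h1
      have hlog : Real.log |gfun P r| < 0 := Real.log_neg (abs_pos.mpr h0) hlt
      rcases Real.sign_apply_eq_of_ne_zero _ h0 with h | h <;> rw [h]
      · have : -(-1 : ℝ) * Real.log |gfun P r| = Real.log |gfun P r| := by ring
        rw [this, Real.sign_of_neg hlog]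
      · have : -(1 : ℝ) * Real.log |gfun P r| = -Real.log |gfun P r| := by ring
        rw [this, Real.sign_of_pos (by linarith)]

lemma abs_phiStar {R : Type*} (P : R → ZMod 2 → ℝ) {ε : ℝ} (hε : 0 < ε) (r : R)
    (hle : |gfun P r| ≤ 1) :
    |phiStar P ε r| = -Real.log |gfun P r| + (if |gfun P r| = 1 then ε else 0) := by
  unfold phiStar
  by_cases h1 : |gfun P r| = 1
  · rw [if_pos h1, if_pos h1, h1, Real.log_one]
    have hg : gfun P r ≠ 0 := by intro h; rw [h] at h1; simp at h1
    rcases Real.sign_apply_eq_of_ne_zero _ hg with h | h <;> rw [h]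
    · have : (-1 : ℝ) * ε = -ε := by ring
      rw [this, abs_neg, abs_of_pos hε]; ring
    · rw [one_mul, abs_of_pos hε]; ring
  · rw [if_neg h1, if_neg h1]
    by_cases h0 : gfun P r = 0
    · rw [if_pos h0, h0, abs_zero, Real.log_zero]; norm_num
    · rw [if_neg h0]
      have hlt : |gfun P r| < 1 := lt_of_le_of_ne hle h1
      have hlog : Real.log |gfun P r| < 0 := Real.log_neg (abs_pos.mpr h0) hlt
      rcases Real.sign_apply_eq_of_ne_zero _ h0 with h | h <;> rw [h]
      · have : -(-1 : ℝ) * Real.log |gfun P r| = Real.log |gfun P r| := by ring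
        rw [this, abs_of_neg hlog]; ring
      · have : -(1 : ℝ) * Real.log |gfun P r| = -Real.log |gfun P r| := by ring
        rw [this, abs_of_pos (by linarith : (0:ℝ) < -Real.log |gfun P r|)]; ring

lemma abs_phiStar_pos {R : Type*} (P : R → ZMod 2 → ℝ) {ε : ℝ} (hε : 0 < ε) (r : R)
    (hle : |gfun P r| ≤ 1) (h0 : gfun P r ≠ 0) : 0 < |phiStar P ε r| := by
  rw [abs_phiStar P hε r hle]
  by_cases h1 : |gfun P r| = 1
  · rw [if_pos h1, h1, Real.log_one]; linarith
  · rw [if_neg h1]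
    have hlog : Real.log |gfun P r| < 0 :=
      Real.log_neg (abs_pos.mpr h0) (lt_of_le_of_ne hle h1)
    linarith

lemma real_sign_mono {a b : ℝ} (h : a < b) : Real.sign a ≤ Real.sign b := by
  rcases lt_trichotomy a 0 with ha | ha | ha
  · rw [Real.sign_of_neg ha]
    rcases Real.sign_apply_eq b with hb | hb | hb <;> rw [hb] <;> norm_num
  · rw [ha, Real.sign_zero, Real.sign_of_pos (ha ▸ h)]; norm_num
  · rw [Real.sign_of_pos ha, Real.sign_of_pos (lt_trans ha h)]

lemma gProd_lt_gProd {R : Type*} [Fintype R] (P : R → ZMod 2 → ℝ)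
    (hpos : ∀ r : R, 0 < P r 0 + P r 1) {d : ℕ} (r r' : Fin d → R)
    (hLR : checkPmf P d r 0 * checkPmf P d r' 1 > checkPmf P d r' 0 * checkPmf P d r 1) :
    gProd P r' < gProd P r := by
  have hc : (0:ℝ) < (1/2:ℝ)^(d-1) := by positivity
  have hSA : (0:ℝ) < ∏ i, (P (r i) 0 + P (r i) 1) := Finset.prod_pos fun i _ => hpos (r i)
  have hSB : (0:ℝ) < ∏ i, (P (r' i) 0 + P (r' i) 1) := Finset.prod_pos fun i _ => hpos (r' i)
  have eA0 : checkPmf P d r 0 =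
      ((1/2:ℝ)^(d-1) * ((∏ i, (P (r i) 0 + P (r i) 1)) + ∏ i, (P (r i) 0 - P (r i) 1)))/2 := by
    have h1 := checkPmf_add P d r; have h2 := checkPmf_sub P d r
    rw [mul_add]; linarith
  have eA1 : checkPmf P d r 1 =
      ((1/2:ℝ)^(d-1) * ((∏ i, (P (r i) 0 + P (r i) 1)) - ∏ i, (P (r i) 0 - P (r i) 1)))/2 := by
    have h1 := checkPmf_add P d r; have h2 := checkPmf_sub P d r
    rw [mul_sub]; linarith
  have eB0 : checkPmf P d r' 0 =
      ((1/2:ℝ)^(d-1) * ((∏ i, (P (r' i) 0 + P (r' i) 1)) + ∏ i, (P (r' i) 0 - P (r' i) 1)))/2 := by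
    have h1 := checkPmf_add P d r'; have h2 := checkPmf_sub P d r'
    rw [mul_add]; linarith
  have eB1 : checkPmf P d r' 1 =
      ((1/2:ℝ)^(d-1) * ((∏ i, (P (r' i) 0 + P (r' i) 1)) - ∏ i, (P (r' i) 0 - P (r' i) 1)))/2 := by
    have h1 := checkPmf_add P d r'; have h2 := checkPmf_sub P d r'
    rw [mul_sub]; linarith
  rw [eA0, eA1, eB0, eB1] at hLR
  rw [gProd_eq, gProd_eq, div_lt_div_iff₀ hSB hSA]
  nlinarith [hLR, mul_pos hc hc]

lemma prod_sign_phiStar {R : Type*} [Fintype R] (P : R → ZMod 2 → ℝ)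
    (hP0 : ∀ r x, 0 ≤ P r x) (hpos : ∀ r : R, 0 < P r 0 + P r 1) {ε : ℝ} (hε : 0 < ε)
    {d : ℕ} (r : Fin d → R) :
    ∏ i, Real.sign (phiStar P ε (r i)) = Real.sign (gProd P r) := by
  rw [Finset.prod_congr rfl (fun i _ => sign_phiStar P hε _ (abs_gfun_le_one P hP0 hpos _)),
    ← real_sign_prod]
  rfl

lemma sum_abs_phiStar {R : Type*} [Fintype R] (P : R → ZMod 2 → ℝ)
    (hP0 : ∀ r x, 0 ≤ P r x) (hpos : ∀ r : R, 0 < P r 0 + P r 1) {ε : ℝ} (hε : 0 < ε)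
    {d : ℕ} (r : Fin d → R) :
    ∑ i, |phiStar P ε (r i)| = (∑ i, -Real.log |gfun P (r i)|) +
      ((Finset.univ.filter (fun i => |gfun P (r i)| = 1)).card : ℝ) * ε := by
  rw [Finset.sum_congr rfl
    (fun i _ => abs_phiStar P hε (r i) (abs_gfun_le_one P hP0 hpos _)),
    Finset.sum_add_distrib]
  congr 1
  rw [← Finset.sum_filter, Finset.sum_const, nsmul_eq_mul]

lemma sum_neg_log {R : Type*} [Fintype R] (P : R → ZMod 2 → ℝ) {d : ℕ} (r : Fin d → R)
    (h0 : gProd P r ≠ 0) :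
    ∑ i, -Real.log |gfun P (r i)| = -Real.log |gProd P r| := by
  unfold gProd at h0 ⊢
  rw [Finset.abs_prod, Real.log_prod
    (fun i _ => abs_ne_zero.mpr (Finset.prod_ne_zero_iff.mp h0 i (Finset.mem_univ i))),
    Finset.sum_neg_distrib]

lemma sign_PhiC {R : Type*} [Fintype R] (P : R → ZMod 2 → ℝ)
    (hP0 : ∀ r x, 0 ≤ P r x) (hpos : ∀ r : R, 0 < P r 0 + P r 1) {ε : ℝ} (hε : 0 < ε)
    {d : ℕ} (hd : 0 < d) (r : Fin d → R) :
    Real.sign (PhiC (phiStar P ε) r) = Real.sign (gProd P r) := by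
  unfold PhiC
  rw [prod_sign_phiStar P hP0 hpos hε r]
  by_cases h0 : gProd P r = 0
  · rw [h0, Real.sign_zero, zero_mul, Real.sign_zero]
  · have hne : ∀ i, gfun P (r i) ≠ 0 := by
      intro i
      exact Finset.prod_ne_zero_iff.mp h0 i (Finset.mem_univ i)
    haveI : Nonempty (Fin d) := ⟨⟨0, hd⟩⟩
    have hS : 0 < ∑ i, |phiStar P ε (r i)| :=
      Finset.sum_pos (fun i _ => abs_phiStar_pos P hε _ (abs_gfun_le_one P hP0 hpos _) (hne i))
        Finset.univ_nonempty
    rcases Real.sign_apply_eq_of_ne_zero _ h0 with h | h <;> rw [h]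
    · rw [neg_one_mul, Real.sign_neg, Real.sign_of_pos hS]
    · rw [one_mul, Real.sign_of_pos hS]

/-- If the likelihood ratio of `r` strictly exceeds that of `r'` (in
cross-multiplied form), then `Φ(r) ≻ Φ(r')`. -/
theorem stmt_5 {R : Type*} [Fintype R] (P : R → ZMod 2 → ℝ)
    (hP0 : ∀ r x, 0 ≤ P r x) (hP1 : ∀ x, ∑ r : R, P r x = 1)
    (hpos : ∀ r : R, 0 < P r 0 + P r 1)
    (dc : ℕ) (hdc : 2 ≤ dc) (ε : ℝ) (hε : admissible P dc ε)
    (r r' : Fin (dc - 1) → R)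
    (hLR : checkPmf P (dc - 1) r 0 * checkPmf P (dc - 1) r' 1 >
      checkPmf P (dc - 1) r' 0 * checkPmf P (dc - 1) r 1) :
    rsucc (PhiC (phiStar P ε) r) (PhiC (phiStar P ε) r') := by
  obtain ⟨hεdc, hadm⟩ := hε
  have hdcR : (0:ℝ) < (dc:ℝ) := by
    have : 0 < dc := by omega
    exact_mod_cast this
  have hεpos : 0 < ε := by nlinarith
  have hd : 0 < dc - 1 := by omega
  have hgt : gProd P r' < gProd P r := gProd_lt_gProd P hpos r r' hLR
  have hsA := sign_PhiC P hP0 hpos hεpos hd r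
  have hsB := sign_PhiC P hP0 hpos hεpos hd r'
  rcases lt_trichotomy (Real.sign (gProd P r')) (Real.sign (gProd P r)) with hs | hs | hs
  · left; rw [hsA, hsB]; exact hs
  · right
    have hgA0 : gProd P r ≠ 0 := by
      intro h
      have h2 : gProd P r' = 0 :=
        Real.sign_eq_zero_iff.mp (hs.trans (by rw [h, Real.sign_zero]))
      rw [h, h2] at hgt; exact lt_irrefl _ hgt
    have hgB0 : gProd P r' ≠ 0 := by
      intro h
      have h2 : gProd P r = 0 :=
        Real.sign_eq_zero_iff.mp (hs.symm.trans (by rw [h, Real.sign_zero]))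
      rw [h, h2] at hgt; exact lt_irrefl _ hgt
    have hadm' := hadm r r' (ne_of_gt hgt) hs.symm
      (fun hz => hgA0 (Real.sign_eq_zero_iff.mp hz))
    refine ⟨by rw [hsA, hsB, hs], ?_⟩
    unfold PhiC
    rw [prod_sign_phiStar P hP0 hpos hεpos r, prod_sign_phiStar P hP0 hpos hεpos r',
      sum_abs_phiStar P hP0 hpos hεpos r, sum_abs_phiStar P hP0 hpos hεpos r',
      sum_neg_log P r hgA0, sum_neg_log P r' hgB0]
    set kA := ((Finset.univ.filter (fun i => |gfun P (r i)| = 1)).card : ℝ) with hkAdef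
    set kB := ((Finset.univ.filter (fun i => |gfun P (r' i)| = 1)).card : ℝ) with hkBdef
    have hcard : ∀ s : Fin (dc - 1) → R,
        (((Finset.univ.filter (fun i => |gfun P (s i)| = 1)).card : ℝ)) ≤ (dc:ℝ) - 1 := by
      intro s
      have h1 : (Finset.univ.filter (fun i => |gfun P (s i)| = 1)).card ≤ dc - 1 :=
        le_trans (Finset.card_filter_le _ _) (by simp)
      calc ((Finset.univ.filter (fun i => |gfun P (s i)| = 1)).card : ℝ)
          ≤ ((dc - 1 : ℕ) : ℝ) := by exact_mod_cast h1
        _ = (dc:ℝ) - 1 := by rw [Nat.cast_sub (by omega)]; norm_num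
    have hkA1 : kA ≤ (dc:ℝ) - 1 := hcard r
    have hkB1 : kB ≤ (dc:ℝ) - 1 := hcard r'
    have hkA0 : 0 ≤ kA := Nat.cast_nonneg _
    have hkB0 : 0 ≤ kB := Nat.cast_nonneg _
    rcases Real.sign_apply_eq_of_ne_zero _ hgA0 with h | h
    · have hgAneg : gProd P r < 0 := by
        rcases lt_trichotomy (gProd P r) 0 with h' | h' | h'
        · exact h'
        · exact absurd h' hgA0
        · rw [Real.sign_of_pos h'] at h; norm_num at h
      have hgBneg : gProd P r' < 0 := lt_trans hgt hgAneg
      have habs : |gProd P r| < |gProd P r'| := by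
        rw [abs_of_neg hgAneg, abs_of_neg hgBneg]; linarith
      have hlog : Real.log |gProd P r| < Real.log |gProd P r'| :=
        Real.log_lt_log (abs_pos.mpr hgA0) habs
      rw [abs_of_neg (by linarith : Real.log |gProd P r| - Real.log |gProd P r'| < 0)]
        at hadm'
      rw [hs, h]
      have e1 : kB * ε ≤ ((dc:ℝ) - 1) * ε := mul_le_mul_of_nonneg_right hkB1 hεpos.le
      have e2 : 0 ≤ kA * ε := mul_nonneg hkA0 hεpos.le
      nlinarith [hadm', e1, e2]
    · have hgApos : 0 < gProd P r := by
        rcases lt_trichotomy (gProd P r) 0 with h' | h' | h'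
        · rw [Real.sign_of_neg h'] at h; norm_num at h
        · exact absurd h' hgA0
        · exact h'
      have hgBpos : 0 < gProd P r' := by
        rcases lt_trichotomy (gProd P r') 0 with h' | h' | h'
        · rw [Real.sign_of_neg h'] at hs; rw [h] at hs; norm_num at hs
        · exact absurd h' hgB0
        · exact h'
      have habs : |gProd P r'| < |gProd P r| := by
        rw [abs_of_pos hgApos, abs_of_pos hgBpos]; exact hgt
      have hlog : Real.log |gProd P r'| < Real.log |gProd P r| :=
        Real.log_lt_log (abs_pos.mpr hgB0) habs
      rw [abs_of_pos (by linarith : 0 < Real.log |gProd P r| - Real.log |gProd P r'|)]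
        at hadm'
      rw [hs, h]
      have e1 : kA * ε ≤ ((dc:ℝ) - 1) * ε := mul_le_mul_of_nonneg_right hkA1 hεpos.le
      have e2 : 0 ≤ kB * ε := mul_nonneg hkB0 hεpos.le
      nlinarith [hadm', e1, e2]
  · exact absurd hs (not_lt.mpr (real_sign_mono hgt))
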